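/- Let m ≥ 2 and define f(s'₁,…,s'_{m−1}) := Σ_{l=1}^{m−1} s'_l − m + 1/(1 − Σ_{l=1}^{m−1} 1/(s'_l + m)) on a neighborhood of the origin in ℝ^{m−1}. Then the origin is a critical point of f, f(0) = 0, and the Hessian matrix of f at the origin is positive definite. -/

import Mathlib

open Filter Metric ContinuousLinearMap Finset

noncomputable def Pj (n : ℕ) (l : Fin n) : (Fin n → ℝ) →L[ℝ] ℝ := ContinuousLinearMap.proj l

theorem aux13 (n : ℕ) (c : ℝ) (hc : 2 ≤ c) (hn : (n : ℝ) = c - 1)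
    (f : (Fin n → ℝ) → ℝ)
    (hf : ∀ s, f s = (∑ l, s l) - c + (1 - ∑ l, (s l + c)⁻¹)⁻¹) :
    f 0 = 0 ∧ fderiv ℝ f 0 = 0 ∧
      ∀ v : Fin n → ℝ, v ≠ 0 → 0 < iteratedFDeriv ℝ 2 f 0 (fun _ => v) := by
  have hfe : f = fun s => (∑ l, s l) - c + (1 - ∑ l, (s l + c)⁻¹)⁻¹ := funext hf
  subst hfe
  have hc0 : (0:ℝ) < c := by linarith
  set U : Set (Fin n → ℝ) := {s | ∀ l, |s l| < 1/2} with hU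
  have hUopen : IsOpen U := by
    have : U = ⋂ l, (fun s : Fin n → ℝ => s l) ⁻¹' (Metric.ball (0:ℝ) (1/2)) := by
      ext s
      simp [hU, Real.ball_eq_Ioo, abs_lt]
    rw [this]
    exact isOpen_iInter_of_finite fun l => isOpen_ball.preimage (continuous_apply l)
  have h0U : (0 : Fin n → ℝ) ∈ U := by
    intro l; norm_num
  -- facts on U
  have hpos : ∀ s ∈ U, ∀ l, (0:ℝ) < s l + c := by
    intro s hs l
    have := (abs_lt.mp (hs l)).1
    linarith
  have hgpos : ∀ s ∈ U, (0:ℝ) < 1 - ∑ l, (s l + c)⁻¹ := by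
    intro s hs
    have hlt : ∑ l : Fin n, (s l + c)⁻¹ ≤ (n : ℝ) * (c - 1/2)⁻¹ := by
      have hb : ∀ l ∈ Finset.univ, (s l + c)⁻¹ ≤ (c - 1/2)⁻¹ := by
        intro l _
        have h1 := (abs_lt.mp (hs l)).1
        have h2 : (0:ℝ) < c - 1/2 := by linarith
        apply inv_anti₀ h2
        linarith
      calc ∑ l : Fin n, (s l + c)⁻¹ ≤ (Finset.univ.card : ℕ) • (c - 1/2)⁻¹ :=
            Finset.sum_le_card_nsmul _ _ _ hb
        _ = (n : ℝ) * (c - 1/2)⁻¹ := by simp [nsmul_eq_mul]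
    have h2 : (0:ℝ) < c - 1/2 := by linarith
    have : (n : ℝ) * (c - 1/2)⁻¹ < 1 := by
      rw [hn, ← div_eq_mul_inv, div_lt_one h2]
      linarith
    linarith
  -- the first derivative function
  set L : (Fin n → ℝ) →L[ℝ] ℝ := ∑ j, Pj n j with hL
  set F : (Fin n → ℝ) → ((Fin n → ℝ) →L[ℝ] ℝ) := fun s =>
    ∑ l, (1 - ((s l + c)⁻¹)^2 * ((1 - ∑ j, (s j + c)⁻¹)⁻¹)^2) • (Pj n l)
    with hF
  -- basic derivative facts on U
  have hproj : ∀ (l : Fin n) (s : Fin n → ℝ),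
      HasFDerivAt (fun s : Fin n → ℝ => s l + c) (Pj n l) s := by
    intro l s
    exact (Pj n l).hasFDerivAt.add_const c
  have hu : ∀ s ∈ U, ∀ (l : Fin n),
      HasFDerivAt (fun s : Fin n → ℝ => (s l + c)⁻¹)
        ((-((s l + c)^2)⁻¹) • Pj n l) s := by
    intro s hs l
    exact (hasDerivAt_inv (hpos s hs l).ne').comp_hasFDerivAt s (hproj l s)
  have hS : ∀ s ∈ U, HasFDerivAt (fun s : Fin n → ℝ => ∑ l, (s l + c)⁻¹)
      (∑ l, (-((s l + c)^2)⁻¹) • Pj n l) s := by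
    intro s hs
    exact HasFDerivAt.fun_sum fun l _ => hu s hs l
  have hq : ∀ s ∈ U, HasFDerivAt (fun s : Fin n → ℝ => (1 - ∑ l, (s l + c)⁻¹)⁻¹)
      ((-((1 - ∑ l, (s l + c)⁻¹)^2)⁻¹) •
        ((0 : (Fin n → ℝ) →L[ℝ] ℝ) - ∑ l, (-((s l + c)^2)⁻¹) • Pj n l)) s := by
    intro s hs
    exact (hasDerivAt_inv (hgpos s hs).ne').comp_hasFDerivAt s
      ((hasFDerivAt_const 1 s).sub (hS s hs))
  have hlin : ∀ s : Fin n → ℝ, HasFDerivAt (fun s : Fin n → ℝ => ∑ l, s l) L s := by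
    intro s
    exact HasFDerivAt.fun_sum fun l _ => (Pj n l).hasFDerivAt
  have hderiv : ∀ s ∈ U, HasFDerivAt
      (fun s : Fin n → ℝ => (∑ l, s l) - c + (1 - ∑ l, (s l + c)⁻¹)⁻¹) (F s) s := by
    intro s hs
    have h := ((hlin s).sub_const c).add (hq s hs)
    refine h.congr_fderiv ?_
    symm
    have hgne : (1 - ∑ l, (s l + c)⁻¹) ≠ 0 := (hgpos s hs).ne'
    ext w
    simp only [hF, hL, Pj, ContinuousLinearMap.sum_apply, ContinuousLinearMap.smul_apply,
      ContinuousLinearMap.add_apply, ContinuousLinearMap.sub_apply,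
      ContinuousLinearMap.zero_apply, ContinuousLinearMap.proj_apply, smul_eq_mul,
      ContinuousLinearMap.coe_sum', Finset.sum_apply]
    simp only [inv_pow, sub_mul, one_mul, zero_sub, mul_neg, neg_mul, neg_neg,
      Finset.mul_sum, Finset.sum_sub_distrib]
    rw [sub_eq_add_neg, ← Finset.sum_neg_distrib, ← Finset.sum_neg_distrib]
    exact congrArg _ (Finset.sum_congr rfl fun x _ => by ring)
  -- values at zero
  have hS0 : ∑ l : Fin n, ((0 : Fin n → ℝ) l + c)⁻¹ = (c - 1) * c⁻¹ := by
    simp [Finset.sum_const, Finset.card_univ, nsmul_eq_mul, hn]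
  have hg0 : 1 - ∑ l : Fin n, ((0 : Fin n → ℝ) l + c)⁻¹ = c⁻¹ := by
    rw [hS0]; field_simp; ring
  have hkey0 : ∀ l : Fin n,
      (1 - (((0:Fin n → ℝ) l + c)⁻¹)^2 * ((1 - ∑ j, ((0:Fin n → ℝ) j + c)⁻¹)⁻¹)^2 : ℝ) = 0 := by
    intro l
    rw [hg0]
    simp only [Pi.zero_apply, zero_add, inv_inv]
    field_simp; ring
  have hF0 : F 0 = 0 := by
    rw [hF]
    refine Finset.sum_eq_zero fun l _ => ?_
    rw [hkey0 l, zero_smul]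
  have hfd0 : HasFDerivAt
      (fun s : Fin n → ℝ => (∑ l, s l) - c + (1 - ∑ l, (s l + c)⁻¹)⁻¹) (0 : (Fin n → ℝ) →L[ℝ] ℝ) 0 := by
    have := hderiv 0 h0U
    rwa [hF0] at this
  refine ⟨?_, hfd0.fderiv, ?_⟩
  · simp only [hg0, inv_inv]
    simp
  · -- second derivative
    intro v hv
    have hev : (fderiv ℝ (fun s : Fin n → ℝ =>
        (∑ l, s l) - c + (1 - ∑ l, (s l + c)⁻¹)⁻¹)) =ᶠ[nhds 0] F := by
      filter_upwards [hUopen.mem_nhds h0U] with s hs using (hderiv s hs).fderiv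
    set Φ : (Fin n → ℝ) →L[ℝ] ((Fin n → ℝ) →L[ℝ] ℝ) :=
      ∑ l, (((2/c) • (L + Pj n l)).smulRight (Pj n l)) with hΦ
    have hFd : HasFDerivAt F Φ 0 := by
      rw [hF, hΦ]
      apply HasFDerivAt.fun_sum
      intro l _
      have ha : HasFDerivAt (fun s : Fin n → ℝ => ((s l + c)⁻¹)^2)
          ((2 * ((0 : Fin n → ℝ) l + c)⁻¹ ^ 1) • ((-(((0 : Fin n → ℝ) l + c)^2)⁻¹) • Pj n l)) 0 :=
        (hasDerivAt_pow 2 _).comp_hasFDerivAt 0 (hu 0 h0U l)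
      have hb : HasFDerivAt (fun s : Fin n → ℝ => ((1 - ∑ j, (s j + c)⁻¹)⁻¹)^2)
          ((2 * ((1 - ∑ j, ((0 : Fin n → ℝ) j + c)⁻¹)⁻¹) ^ 1) •
            ((-((1 - ∑ j, ((0 : Fin n → ℝ) j + c)⁻¹)^2)⁻¹) •
              ((0 : (Fin n → ℝ) →L[ℝ] ℝ) - ∑ j, (-(((0 : Fin n → ℝ) j + c)^2)⁻¹) • Pj n j))) 0 :=
        (hasDerivAt_pow 2 _).comp_hasFDerivAt 0 (hq 0 h0U)
      have hφ := (hasFDerivAt_const (1:ℝ) 0).sub (ha.mul hb)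
      have hterm := hφ.smul_const (Pj n l)
      refine hterm.congr_fderiv ?_
      symm
      ext w w'
      simp only [hg0, Pi.zero_apply, zero_add, inv_inv, hL, Pj,
        ContinuousLinearMap.smulRight_apply, ContinuousLinearMap.smul_apply,
        ContinuousLinearMap.add_apply, ContinuousLinearMap.sub_apply,
        ContinuousLinearMap.zero_apply, ContinuousLinearMap.sum_apply,
        ContinuousLinearMap.proj_apply, smul_eq_mul, pow_one, zero_sub, mul_neg, neg_mul,
        neg_neg, zero_mul, zero_smul, smul_smul, Finset.sum_neg_distrib,
        Finset.sum_const, Finset.card_univ, Fintype.card_fin, nsmul_eq_mul, hn,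
        ContinuousLinearMap.neg_apply]
      rw [← Finset.mul_sum]
      have hg1 : (1 - (c - 1) * c⁻¹ : ℝ) = c⁻¹ := by field_simp; ring
      rw [hg1, inv_inv]
      have hcne : c ≠ 0 := hc0.ne'
      field_simp
      ring
    have h2 : iteratedFDeriv ℝ 2
        (fun s : Fin n → ℝ => (∑ l, s l) - c + (1 - ∑ l, (s l + c)⁻¹)⁻¹) 0 (fun _ => v)
        = Φ v v := by
      rw [iteratedFDeriv_two_apply]
      rw [hev.fderiv_eq, hFd.fderiv]
    rw [h2, hΦ]
    have hval : (∑ l, (((2/c) • (L + Pj n l)).smulRight (Pj n l))) v v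
        = ∑ l, (2/c) * ((∑ j, v j) + v l) * v l := by
      simp [hL, Pj, ContinuousLinearMap.smulRight_apply, ContinuousLinearMap.sum_apply,
        ContinuousLinearMap.smul_apply, ContinuousLinearMap.add_apply,
        ContinuousLinearMap.proj_apply, smul_eq_mul]
      exact Finset.sum_congr rfl fun l _ => by ring
    rw [hval]
    have hexp : ∑ l, (2/c) * ((∑ j, v j) + v l) * v l
        = (2/c) * ((∑ j, v j) * (∑ l, v l) + ∑ l, v l * v l) := by
      rw [Finset.mul_sum, ← Finset.sum_add_distrib, Finset.mul_sum]
      exact Finset.sum_congr rfl fun l _ => by ring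
    rw [hexp]
    obtain ⟨l, hl⟩ := Function.ne_iff.mp hv
    have hsq : 0 < ∑ l, v l * v l := by
      apply Finset.sum_pos'
      · intro i _; exact mul_self_nonneg _
      · exact ⟨l, Finset.mem_univ l, mul_self_pos.mpr hl⟩
    have h2c : (0:ℝ) < 2/c := by positivity
    have hsq2 : 0 ≤ (∑ j, v j) * (∑ l, v l) := mul_self_nonneg _
    have := mul_pos h2c (by linarith : (0:ℝ) < (∑ j, v j) * (∑ l, v l) + ∑ l, v l * v l)
    linarith

theorem stmt13 (m : ℕ) (hm : 2 ≤ m)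
    (f : (Fin (m - 1) → ℝ) → ℝ)
    (hf : ∀ s, f s = (∑ l, s l) - m + 1 / (1 - ∑ l, 1 / (s l + m))) :
    f 0 = 0 ∧ fderiv ℝ f 0 = 0 ∧
      ∀ v : Fin (m - 1) → ℝ, v ≠ 0 →
        0 < iteratedFDeriv ℝ 2 f 0 (fun _ => v) := by
  apply aux13 (m - 1) (m : ℝ)
  · exact_mod_cast hm
  · have h1 : 1 ≤ m := le_trans (by norm_num) hm
    push_cast [Nat.cast_sub h1]
    ring
  · intro s
    simpa [one_div] using hf s
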